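/- Let X be a nontrivial complex Banach space and A : X → X a continuous linear operator whose spectrum is contained in the open left half-plane {z ∈ ℂ : Re z < 0}. Then ‖exp(t A)‖ → 0 as t → +∞, where exp denotes the operator exponential in the Banach algebra of continuous linear operators on X. -/

import Mathlib

open Filter NormedSpace Topology

lemma specExpBound {B : Type*} [NormedRing B] [NormedAlgebra ℂ B] [CompleteSpace B]
    (a : B) {s : ℝ} (hs : ∀ z ∈ spectrum ℂ a, z.re ≤ s) :
    ∀ μ ∈ spectrum ℂ (exp a), ‖μ‖ ≤ Real.exp s := by
  intro μ hμ
  set C := (Algebra.adjoin ℂ {a}).topologicalClosure with hCdef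
  haveI hC : IsClosed (C : Set B) := Subalgebra.isClosed_topologicalClosure _
  haveI : CompleteSpace C := hC.completeSpace_coe
  have hcomm : ∀ x y : (Algebra.adjoin ℂ {a}), x * y = y * x := by
    rintro ⟨x, hx⟩ ⟨y, hy⟩
    ext
    rw [Algebra.adjoin_singleton_eq_range_aeval] at hx hy
    obtain ⟨p, rfl⟩ := hx
    obtain ⟨q, rfl⟩ := hy
    exact (Commute.all p q).map (Polynomial.aeval a)
  letI : CommRing C := Subalgebra.commRingTopologicalClosure _ hcomm
  letI : NormedCommRing C := { (inferInstance : NormedRing C) with mul_comm := mul_comm }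
  have haC : a ∈ C := (Algebra.adjoin ℂ {a}).le_topologicalClosure
    (Algebra.self_mem_adjoin_singleton ℂ a)
  set aC : C := ⟨a, haC⟩ with haCdef
  have hval : ((exp aC : C) : B) = exp a := by
    letI : NormedAlgebra ℚ C := .restrictScalars ℚ ℂ C
    letI : NormedAlgebra ℚ B := .restrictScalars ℚ ℂ B
    have := map_exp C.val continuous_subtype_val aC
    simpa using this
  have hμC : μ ∈ spectrum ℂ (exp aC) := by
    apply spectrum.subset_subalgebra (a := exp aC)
    rw [hval]; exact hμ
  obtain ⟨φ, hφ⟩ := WeakDual.CharacterSpace.mem_spectrum_iff_exists.mp hμC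
  have hφexp : φ (exp aC) = Complex.exp (φ aC) := by
    letI : NormedAlgebra ℚ C := .restrictScalars ℚ ℂ C
    rw [map_exp φ (map_continuous φ) aC, Complex.exp_eq_exp_ℂ]
  set w := φ aC with hwdef
  have hw : w ∈ spectrum ℂ aC := WeakDual.CharacterSpace.apply_mem_spectrum φ aC
  have hcpt : IsCompact (spectrum ℂ aC) := spectrum.isCompact aC
  obtain ⟨w', hw', hmax⟩ := hcpt.exists_isMaxOn ⟨w, hw⟩ Complex.continuous_re.continuousOn
  have hfront : w' ∈ frontier (spectrum ℂ aC) := by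
    rw [frontier_eq_closure_inter_closure]
    refine ⟨subset_closure hw', ?_⟩
    have htend : Tendsto (fun n : ℕ => w' + (((n : ℝ) + 1)⁻¹ : ℝ)) atTop (𝓝 w') := by
      have h0 : Tendsto (fun n : ℕ => ((n : ℝ) + 1)⁻¹) atTop (𝓝 0) :=
        tendsto_one_div_add_atTop_nhds_zero_nat.congr (by simp [one_div])
      have := h0.ofReal
      simpa using tendsto_const_nhds.add this
    refine mem_closure_of_tendsto htend (Eventually.of_forall fun n => ?_)
    intro hmem
    have h1 : (w' + (((n : ℝ) + 1)⁻¹ : ℝ) : ℂ).re ≤ w'.re := hmax hmem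
    simp only [Complex.add_re, Complex.ofReal_re] at h1
    have h2 : (0 : ℝ) < ((n : ℝ) + 1)⁻¹ := by positivity
    linarith
  have hw'B : w' ∈ spectrum ℂ a := Subalgebra.frontier_spectrum C aC hfront
  have hre : w.re ≤ s := le_trans (hmax hw) (hs w' hw'B)
  calc ‖μ‖ = Real.exp w.re := by rw [← hφ, hφexp, Complex.norm_exp]
    _ ≤ Real.exp s := Real.exp_le_exp.mpr hre


lemma norm_exp_le' {𝔸 : Type*} [NormedRing 𝔸] [NormedAlgebra ℂ 𝔸] [CompleteSpace 𝔸]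
    [NormOneClass 𝔸] (x : 𝔸) :
    ‖exp x‖ ≤ Real.exp ‖x‖ := by
  rw [exp_eq_tsum ℂ]
  refine (norm_tsum_le_tsum_norm (norm_expSeries_summable' x)).trans ?_
  have h2 : Real.exp ‖x‖ = ∑' n : ℕ, ‖x‖ ^ n / (n.factorial : ℝ) := by
    rw [Real.exp_eq_exp_ℝ, exp_eq_tsum_div]
  rw [h2]
  refine Summable.tsum_le_tsum (fun n => ?_) (norm_expSeries_summable' x)
    (Real.summable_pow_div_factorial ‖x‖)
  rw [norm_smul, norm_inv]
  have ha : ‖((n.factorial : ℂ))‖ = (n.factorial : ℝ) := by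
    rw [Complex.norm_natCast]
  rw [ha, div_eq_inv_mul]
  have hfp : (0:ℝ) ≤ ((n.factorial : ℝ))⁻¹ := by positivity
  exact mul_le_mul_of_nonneg_left (norm_pow_le x n) hfp

set_option maxHeartbeats 1000000 in
/-- if the spectrum of a continuous linear operator `A` on a
nontrivial complex Banach space lies in the open left half-plane, then the
operator exponential satisfies `‖exp (t • A)‖ → 0` as `t → +∞`. -/
theorem stmt6
    {X : Type*} [NormedAddCommGroup X] [NormedSpace ℂ X] [CompleteSpace X]
    [Nontrivial X]
    (A : X →L[ℂ] X) (hspec : spectrum ℂ A ⊆ {z : ℂ | z.re < 0}) :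
    Tendsto (fun t : ℝ => ‖NormedSpace.exp ((t : ℂ) • A)‖) atTop (nhds 0) := by
  obtain ⟨s, hs0, hsb⟩ : ∃ s : ℝ, s < 0 ∧ ∀ z ∈ spectrum ℂ (A : X →L[ℂ] X), z.re ≤ s := by
    rcases Set.eq_empty_or_nonempty (spectrum ℂ (A : X →L[ℂ] X)) with h | h
    · exact ⟨-1, by norm_num, by simp [h]⟩
    · obtain ⟨z₀, hz₀, hmax⟩ := (spectrum.isCompact (A : X →L[ℂ] X)).exists_isMaxOn h
        Complex.continuous_re.continuousOn
      exact ⟨z₀.re, hspec hz₀, fun z hz => hmax hz⟩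
  set E := NormedSpace.exp (A : X →L[ℂ] X) with hEdef
  have hrad : spectralRadius ℂ E ≤ ENNReal.ofReal (Real.exp s) := by
    rw [spectralRadius]
    refine iSup₂_le fun z hz => ?_
    have h := specExpBound (A : X →L[ℂ] X) hsb z hz
    rw [← ENNReal.ofReal_coe_nnreal, coe_nnnorm]
    exact ENNReal.ofReal_le_ofReal h
  have hlt1 : spectralRadius ℂ E < 1 := by
    refine lt_of_le_of_lt hrad ?_
    rw [← ENNReal.ofReal_one]
    exact ENNReal.ofReal_lt_ofReal_iff_of_nonneg (Real.exp_pos s).le |>.mpr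
      (by simpa using Real.exp_lt_one_iff.mpr hs0)
  have hpow : Tendsto (fun n : ℕ => ‖E ^ n‖) atTop (𝓝 0) := by
    obtain ⟨q, hq1, hq2⟩ := exists_between hlt1
    have hqt : q ≠ ⊤ := (hq2.trans_le le_top).ne
    have hgel := spectrum.pow_nnnorm_pow_one_div_tendsto_nhds_spectralRadius E
    have hev : ∀ᶠ n : ℕ in atTop, ‖E ^ n‖ ≤ q.toReal ^ n := by
      filter_upwards [hgel.eventually_lt_const hq1, eventually_gt_atTop 0] with n hn hn0
      have hx : ((‖E ^ n‖₊ : ENNReal) ^ (1 / (n : ℝ))) ^ (n : ℝ) = (‖E ^ n‖₊ : ENNReal) := by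
        rw [← ENNReal.rpow_mul, one_div, inv_mul_cancel₀ (by exact_mod_cast hn0.ne'),
          ENNReal.rpow_one]
      have h1 : (‖E ^ n‖₊ : ENNReal) ≤ q ^ n := by
        calc (‖E ^ n‖₊ : ENNReal) = _ := hx.symm
          _ ≤ q ^ (n : ℝ) := ENNReal.rpow_le_rpow hn.le (Nat.cast_nonneg n)
          _ = q ^ n := by rw [ENNReal.rpow_natCast]
      have h2 := ENNReal.toReal_mono (ENNReal.pow_ne_top hqt) h1
      simpa [ENNReal.toReal_pow] using h2
    have hq01 : q.toReal < 1 := by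
      have := ENNReal.toReal_mono (by norm_num) hq2.le
      rcases this.lt_or_eq with h | h
      · simpa using h
      · exfalso
        have := ENNReal.toReal_lt_toReal hqt (by norm_num) |>.mpr hq2
        simp at this h
        linarith
    exact squeeze_zero' (Eventually.of_forall fun n => norm_nonneg _) hev
      (tendsto_pow_atTop_nhds_zero_of_lt_one ENNReal.toReal_nonneg hq01)
  have hfin : Tendsto (fun t : ℝ => ‖E ^ ⌊t⌋₊‖ * Real.exp ‖(A : X →L[ℂ] X)‖) atTop (𝓝 0) := by
    have h := hpow.comp (tendsto_nat_floor_atTop (α := ℝ))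
    simpa using h.mul_const (Real.exp ‖(A : X →L[ℂ] X)‖)
  refine squeeze_zero' (Eventually.of_forall fun t => norm_nonneg _) ?_ hfin
  filter_upwards [eventually_ge_atTop (0 : ℝ)] with t ht
  have hu0 : (0 : ℝ) ≤ t - ⌊t⌋₊ := sub_nonneg.mpr (Nat.floor_le ht)
  have hu1 : t - ⌊t⌋₊ ≤ 1 := by
    have := (Nat.lt_floor_add_one t).le
    linarith
  have hsplit : NormedSpace.exp ((t : ℂ) • A) =
      E ^ ⌊t⌋₊ * NormedSpace.exp (((t - ⌊t⌋₊ : ℝ) : ℂ) • A) := by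
    have h1 : ((t : ℂ)) • A = ((⌊t⌋₊ : ℂ)) • A + (((t - ⌊t⌋₊ : ℝ) : ℂ)) • A := by
      rw [← add_smul]
      congr 1
      push_cast
      ring
    letI : NormedAlgebra ℚ (X →L[ℂ] X) := .restrictScalars ℚ ℂ (X →L[ℂ] X)
    rw [h1, exp_add_of_commute (((Commute.refl A).smul_left _).smul_right _)]
    congr 1
    rw [show ((⌊t⌋₊ : ℂ)) • A = (⌊t⌋₊ : ℕ) • A from (Nat.cast_smul_eq_nsmul ℂ _ _), exp_nsmul]
  rw [hsplit]
  calc ‖E ^ ⌊t⌋₊ * NormedSpace.exp (((t - ⌊t⌋₊ : ℝ) : ℂ) • A)‖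
      ≤ ‖E ^ ⌊t⌋₊‖ * ‖NormedSpace.exp (((t - ⌊t⌋₊ : ℝ) : ℂ) • A)‖ := norm_mul_le _ _
    _ ≤ ‖E ^ ⌊t⌋₊‖ * Real.exp ‖(A : X →L[ℂ] X)‖ := by
        refine mul_le_mul_of_nonneg_left ?_ (norm_nonneg _)
        refine (norm_exp_le' _).trans (Real.exp_le_exp.mpr ?_)
        have hc : ‖(((t - ⌊t⌋₊ : ℝ)) : ℂ)‖ ≤ 1 := by
          rw [Complex.norm_real, Real.norm_eq_abs, abs_of_nonneg hu0]
          exact hu1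
        calc ‖(((t - ⌊t⌋₊ : ℝ)) : ℂ) • A‖ ≤ ‖(((t - ⌊t⌋₊ : ℝ)) : ℂ)‖ * ‖A‖ := by
              exact ContinuousLinearMap.opNorm_smul_le _ _
          _ ≤ 1 * ‖A‖ := by gcongr
          _ = ‖A‖ := one_mul _
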